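/- Let V be a finite-dimensional real vector space, dim_ℝ V = m, and let K ⊆ 𝕋V be an isotropic subspace with dim_ℝ K = r, K^⊥ its orthogonal in 𝕋V, and J : K^⊥/K → K^⊥/K an ℝ-linear map with J² = −id and ⟨Ju, v⟩ + ⟨u, Jv⟩ = 0 for the pairing induced on K^⊥/K. Then there exists a unique lagrangian subspace L ⊆ 𝕋_ℂV such that L ∩ L̄ = K_ℂ (the complexification of K) and, under the canonical map (K^⊥)_ℂ → (K^⊥/K)_ℂ, the image of L equals the +i-eigenspace of the complexification of J; in particular L has real index r. -/

import Mathlib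

open TensorProduct Module

noncomputable section

namespace CDirac


/-- The real generalized tangent space `V ⊕ V*`. -/
abbrev TR (V : Type*) [AddCommGroup V] [Module ℝ V] := V × (V →ₗ[ℝ] ℝ)

variable {V : Type*} [AddCommGroup V] [Module ℝ V]

/-- The canonical pairing `⟨X+ξ, Y+η⟩ = (η X + ξ Y)/2` on `𝕋V`. -/
def pairR (a b : TR V) : ℝ := (b.2 a.1 + a.2 b.1) / 2

lemma pairR_add_left (a a' b : TR V) : pairR (a + a') b = pairR a b + pairR a' b := by
  simp only [pairR, Prod.fst_add, Prod.snd_add, map_add, LinearMap.add_apply]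
  ring

lemma pairR_smul_left (c : ℝ) (a b : TR V) : pairR (c • a) b = c * pairR a b := by
  simp only [pairR, Prod.smul_fst, Prod.smul_snd, map_smul, LinearMap.smul_apply,
    smul_eq_mul]
  ring

/-- Orthogonal complement with respect to the pairing on `𝕋V`. -/
def orthR (L : Submodule ℝ (TR V)) : Submodule ℝ (TR V) where
  carrier := {a | ∀ b ∈ L, pairR a b = 0}
  zero_mem' := fun b _ => by simp [pairR]
  add_mem' := fun {a a'} ha ha' b hb => by
    rw [pairR_add_left, ha b hb, ha' b hb, add_zero]
  smul_mem' := fun c a ha b hb => by rw [pairR_smul_left, ha b hb, mul_zero]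

/-- A real lagrangian subspace: `L = L^⊥`. -/
def IsLagrangianR (L : Submodule ℝ (TR V)) : Prop := L = orthR L

/-- An isotropic subspace of `𝕋V`. -/
def IsIsotropicR (K : Submodule ℝ (TR V)) : Prop := ∀ a ∈ K, ∀ b ∈ K, pairR a b = 0

instance instAddCommGroupOrthR (K : Submodule ℝ (TR V)) : AddCommGroup ↥(orthR K) :=
  Submodule.addCommGroup _

/-- The quotient `K^⊥/K`. -/
abbrev quotK (K : Submodule ℝ (TR V)) := ↥(orthR K) ⧸ (K.comap (orthR K).subtype)

/-- The quotient map `K^⊥ → K^⊥/K`. -/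
def mkK (K : Submodule ℝ (TR V)) : ↥(orthR K) →ₗ[ℝ] quotK K :=
  (K.comap (orthR K).subtype).mkQ




/-- The complexification `V_ℂ = ℂ ⊗_ℝ V`. -/
abbrev Cx (V : Type*) [AddCommGroup V] [Module ℝ V] := ℂ ⊗[ℝ] V

/-- The complex dual `(V_ℂ)^*`. -/
abbrev DualC (V : Type*) [AddCommGroup V] [Module ℝ V] := Cx V →ₗ[ℂ] ℂ

/-- The complexified generalized tangent space `𝕋_ℂ V = V_ℂ ⊕ (V_ℂ)^*`. -/
abbrev TCx (V : Type*) [AddCommGroup V] [Module ℝ V] := Cx V × DualC V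

/-- The ℂ-bilinear pairing on `𝕋_ℂ V`. -/
def pairC (a b : TCx V) : ℂ := (b.2 a.1 + a.2 b.1) / 2

lemma pairC_add_left (a a' b : TCx V) : pairC (a + a') b = pairC a b + pairC a' b := by
  simp only [pairC, Prod.fst_add, Prod.snd_add, map_add, LinearMap.add_apply]
  ring

lemma pairC_smul_left (c : ℂ) (a b : TCx V) : pairC (c • a) b = c * pairC a b := by
  simp only [pairC, Prod.smul_fst, Prod.smul_snd, map_smul, LinearMap.smul_apply,
    smul_eq_mul]
  ring

/-- Orthogonal complement with respect to the ℂ-bilinear pairing on `𝕋_ℂ V`. -/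
def orthC (L : Submodule ℂ (TCx V)) : Submodule ℂ (TCx V) where
  carrier := {a | ∀ b ∈ L, pairC a b = 0}
  zero_mem' := fun b _ => by simp [pairC]
  add_mem' := fun {a a'} ha ha' b hb => by
    rw [pairC_add_left, ha b hb, ha' b hb, add_zero]
  smul_mem' := fun c a ha b hb => by rw [pairC_smul_left, ha b hb, mul_zero]

/-- A complex lagrangian subspace: `L = L^⊥`. -/
def IsLagrangianC (L : Submodule ℂ (TCx V)) : Prop := L = orthC L

private lemma conjCxAux_smul (z : ℂ) (x : Cx V) :
    TensorProduct.map Complex.conjAe.toLinearMap LinearMap.id (z • x) =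
      starRingEnd ℂ z • TensorProduct.map Complex.conjAe.toLinearMap LinearMap.id x := by
  induction x using TensorProduct.induction_on with
  | zero => simp
  | tmul w v => simp [smul_tmul', smul_eq_mul, Complex.conjAe_coe, map_mul]
  | add x y hx hy => simp only [smul_add, map_add, hx, hy]

/-- Conjugation on `V_ℂ`, as a `conj`-semilinear map. -/
def conjCx : Cx V →ₛₗ[starRingEnd ℂ] Cx V where
  toFun := TensorProduct.map Complex.conjAe.toLinearMap LinearMap.id
  map_add' := map_add _
  map_smul' := conjCxAux_smul

lemma conjCx_smul (z : ℂ) (x : Cx V) :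
    conjCx (z • x) = starRingEnd ℂ z • conjCx x := conjCxAux_smul z x

/-- Conjugation of a complex linear functional. -/
def conjDualFun (ξ : DualC V) : DualC V where
  toFun x := starRingEnd ℂ (ξ (conjCx x))
  map_add' x y := by simp
  map_smul' z x := by
    rw [conjCx_smul, map_smul, smul_eq_mul, map_mul, RingHom.id_apply]
    simp [smul_eq_mul]

/-- Conjugation on `(V_ℂ)^*`, as a `conj`-semilinear map. -/
def conjDual : DualC V →ₛₗ[starRingEnd ℂ] DualC V where
  toFun := conjDualFun
  map_add' ξ η := by ext x; simp [conjDualFun]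
  map_smul' z ξ := by
    ext x
    simp [conjDualFun, smul_eq_mul, map_mul]

/-- Conjugation on `𝕋_ℂ V`, as a `conj`-semilinear map. -/
def conjT : TCx V →ₛₗ[starRingEnd ℂ] TCx V where
  toFun a := (conjCx a.1, conjDual a.2)
  map_add' a b := by simp [Prod.ext_iff]
  map_smul' z a := by
    simp [Prod.ext_iff, Prod.smul_fst, Prod.smul_snd, map_smulₛₗ]

instance : RingHomSurjective (starRingEnd ℂ) :=
  ⟨fun z => ⟨starRingEnd ℂ z, by simp⟩⟩

/-- The conjugate `L̄` of a ℂ-subspace of `𝕋_ℂ V`. -/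
def conjSub (L : Submodule ℂ (TCx V)) : Submodule ℂ (TCx V) := L.map conjT

/-- The conjugate `Ē` of a ℂ-subspace of `V_ℂ`. -/
def conjE (E : Submodule ℂ (Cx V)) : Submodule ℂ (Cx V) := E.map conjCx

/-- The canonical inclusion `V → V_ℂ`, `v ↦ 1 ⊗ v`. -/
def iV : V →ₗ[ℝ] Cx V := TensorProduct.mk ℝ ℂ V 1





/-- ℝ-linear auxiliary version of the ℂ-linear extension of a real functional. -/
def dualExtAux (α : V →ₗ[ℝ] ℝ) : Cx V →ₗ[ℝ] ℂ :=
  TensorProduct.lift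
    (LinearMap.mk₂ ℝ (fun z v => z * (α v : ℂ))
      (fun z w v => by push_cast; ring)
      (fun r z v => by simp only [Complex.real_smul]; ring)
      (fun z v w => by push_cast [map_add]; ring)
      (fun r z v => by simp only [map_smul, smul_eq_mul, Complex.real_smul]; push_cast; ring))

private lemma dualExtAux_smulC (α : V →ₗ[ℝ] ℝ) (z : ℂ) (x : Cx V) :
    dualExtAux α (z • x) = z * dualExtAux α x := by
  induction x using TensorProduct.induction_on with
  | zero => simp
  | tmul w v =>
      simp only [dualExtAux, smul_tmul', lift.tmul, LinearMap.mk₂_apply, smul_eq_mul]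
      ring
  | add x y hx hy => simp only [smul_add, map_add, hx, hy]; ring

/-- The ℂ-linear extension of a real functional `α : V → ℝ` to `V_ℂ`. -/
def dualExtFun (α : V →ₗ[ℝ] ℝ) : DualC V where
  toFun := dualExtAux α
  map_add' := map_add _
  map_smul' z x := by simpa using dualExtAux_smulC α z x

private lemma dualExtFun_tmul (α : V →ₗ[ℝ] ℝ) (z : ℂ) (v : V) :
    dualExtFun α (z ⊗ₜ[ℝ] v) = z * (α v : ℂ) := by
  simp [dualExtFun, dualExtAux]

/-- The ℂ-linear extension map `V^* → (V_ℂ)^*`, as an ℝ-linear map. -/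
def dualExt : (V →ₗ[ℝ] ℝ) →ₗ[ℝ] DualC V where
  toFun := dualExtFun
  map_add' α β := by
    apply LinearMap.ext; intro x
    induction x using TensorProduct.induction_on with
    | zero => simp
    | tmul w v =>
        simp only [dualExtFun_tmul, LinearMap.add_apply]
        push_cast
        ring
    | add x y hx hy =>
        simp only [map_add, LinearMap.add_apply] at *
        rw [hx, hy]
  map_smul' r α := by
    apply LinearMap.ext; intro x
    induction x using TensorProduct.induction_on with
    | zero => simp
    | tmul w v =>
        simp only [dualExtFun_tmul, RingHom.id_apply, LinearMap.smul_apply,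
          LinearMap.smul_apply, smul_eq_mul, Complex.real_smul]
        push_cast
        ring
    | add x y hx hy =>
        simp only [map_add, RingHom.id_apply, LinearMap.smul_apply, smul_eq_mul] at *
        rw [hx, hy]

/-- The canonical inclusion `𝕋V → 𝕋_ℂV`. -/
def iT : TR V →ₗ[ℝ] TCx V where
  toFun a := (iV a.1, dualExt a.2)
  map_add' a b := by simp [Prod.ext_iff]
  map_smul' r a := by simp [Prod.ext_iff]



/-- Auxiliary ℝ-linear version of the ℂ-bilinear extension of a real bilinear form. -/
def bilinExtAux (B : V →ₗ[ℝ] V →ₗ[ℝ] ℝ) : Cx V →ₗ[ℝ] DualC V :=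
  TensorProduct.lift
    (LinearMap.mk₂ ℝ (fun z v => z • dualExt (B v))
      (fun z w v => by simp only [add_smul])
      (fun r z v => by simp only [smul_assoc])
      (fun z v w => by simp only [map_add, smul_add])
      (fun r z v => by simp only [map_smul]; exact smul_comm z r _))

private lemma bilinExtAux_smulC (B : V →ₗ[ℝ] V →ₗ[ℝ] ℝ) (z : ℂ) (x : Cx V) :
    bilinExtAux B (z • x) = z • bilinExtAux B x := by
  induction x using TensorProduct.induction_on with
  | zero => simp
  | tmul w v =>
      simp only [bilinExtAux, smul_tmul', lift.tmul, LinearMap.mk₂_apply, smul_eq_mul,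
        mul_smul]
  | add x y hx hy => simp only [smul_add, map_add, hx, hy]

/-- The ℂ-bilinear extension of a real bilinear form `B : V × V → ℝ` to `V_ℂ`. -/
def bilinExt (B : V →ₗ[ℝ] V →ₗ[ℝ] ℝ) : Cx V →ₗ[ℂ] DualC V where
  toFun := bilinExtAux B
  map_add' := map_add _
  map_smul' z x := by simpa using bilinExtAux_smulC B z x

/-- The `B`-transformation `e^B(X+ξ) = X + ξ + B̃(X,·)` of `𝕋_ℂV`, for a real `B`. -/
def eB (B : V →ₗ[ℝ] V →ₗ[ℝ] ℝ) : TCx V →ₗ[ℂ] TCx V where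
  toFun a := (a.1, a.2 + bilinExt B a.1)
  map_add' a b := by
    simp only [Prod.fst_add, Prod.snd_add, map_add, Prod.mk_add_mk, Prod.mk.injEq]
    exact ⟨trivial, by abel⟩
  map_smul' z a := by
    simp only [Prod.smul_fst, Prod.smul_snd, map_smul, RingHom.id_apply, Prod.smul_mk,
      Prod.mk.injEq, smul_add]

/-- The real `B`-transformation `e^B(X+α) = X + α + B(X,·)` of `𝕋V`. -/
def eBR (B : V →ₗ[ℝ] V →ₗ[ℝ] ℝ) : TR V →ₗ[ℝ] TR V where
  toFun a := (a.1, a.2 + B a.1)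
  map_add' a b := by
    simp only [Prod.fst_add, Prod.snd_add, map_add, Prod.mk_add_mk, Prod.mk.injEq]
    exact ⟨trivial, by abel⟩
  map_smul' r a := by
    simp only [Prod.smul_fst, Prod.smul_snd, map_smul, RingHom.id_apply, Prod.smul_mk,
      Prod.mk.injEq, smul_add]


/-- The range `E = pr_{V_ℂ}(L)` of a subspace of `𝕋_ℂV`. -/
def Esub (L : Submodule ℂ (TCx V)) : Submodule ℂ (Cx V) :=
  L.map (LinearMap.fst ℂ (Cx V) (DualC V))

/-- The real index `r = dim_ℂ (L ∩ L̄)`. -/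
def riL (L : Submodule ℂ (TCx V)) : ℕ := finrank ℂ ↥(L ⊓ conjSub L)

/-- The real part `K = (L ∩ L̄) ∩ 𝕋V`, as a subspace of `𝕋V`. -/
def Ksub (L : Submodule ℂ (TCx V)) : Submodule ℝ (TR V) :=
  ((L ⊓ conjSub L).restrictScalars ℝ).comap iT

/-- The distribution `D = (E + Ē) ∩ V`, as a subspace of `V`. -/
def Dsub (L : Submodule ℂ (TCx V)) : Submodule ℝ V :=
  ((Esub L ⊔ conjE (Esub L)).restrictScalars ℝ).comap iV

/-- The distribution `Δ = (E ∩ Ē) ∩ V`, as a subspace of `V`. -/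
def DeltaSub (L : Submodule ℂ (TCx V)) : Submodule ℝ V :=
  ((Esub L ⊓ conjE (Esub L)).restrictScalars ℝ).comap iV

/-- The order `s = dim V - dim D`. -/
def orderL (L : Submodule ℂ (TCx V)) : ℕ := finrank ℝ V - finrank ℝ ↥(Dsub L)

/-- The (normalized) type `k = dim_ℂ(E + Ē) - dim_ℂ E`. -/
def typeL (L : Submodule ℂ (TCx V)) : ℕ :=
  finrank ℂ ↥(Esub L ⊔ conjE (Esub L)) - finrank ℂ ↥(Esub L)


end CDirac

open CDirac Module

namespace CDirac

variable {V : Type*} [AddCommGroup V] [Module ℝ V]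

/-! ### Real and imaginary parts -/

/-- Real part of `V_ℂ`. -/
def reV : Cx V →ₗ[ℝ] V :=
  TensorProduct.lift (LinearMap.mk₂ ℝ (fun z v => z.re • v)
    (fun z w v => by simp [add_smul])
    (fun r z v => by simp [Complex.smul_re, mul_smul])
    (fun z v w => by simp)
    (fun r z v => smul_comm _ r v))

/-- Imaginary part of `V_ℂ`. -/
def imV : Cx V →ₗ[ℝ] V :=
  TensorProduct.lift (LinearMap.mk₂ ℝ (fun z v => z.im • v)
    (fun z w v => by simp [add_smul])
    (fun r z v => by simp [Complex.smul_im, mul_smul])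
    (fun z v w => by simp)
    (fun r z v => smul_comm _ r v))

@[simp] lemma reV_iV (v : V) : reV (iV v) = v := by
  simp [reV, iV]

@[simp] lemma imV_iV (v : V) : imV (iV v) = 0 := by
  simp [imV, iV]

@[simp] lemma reV_I_smul (x : Cx V) : reV (Complex.I • x) = - imV x := by
  induction x using TensorProduct.induction_on with
  | zero => simp
  | tmul z v =>
      simp [reV, imV, TensorProduct.smul_tmul', Complex.mul_re]
  | add x y hx hy => simp only [smul_add, map_add, hx, hy, neg_add]

@[simp] lemma imV_I_smul (x : Cx V) : imV (Complex.I • x) = reV x := by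
  induction x using TensorProduct.induction_on with
  | zero => simp
  | tmul z v =>
      simp [reV, imV, TensorProduct.smul_tmul', Complex.mul_im]
  | add x y hx hy => simp only [smul_add, map_add, hx, hy]

private lemma real_smul_cx (r : ℝ) (y : Cx V) : r • y = (r : ℂ) • y :=
  (algebraMap_smul ℂ r y).symm

lemma decompV (x : Cx V) : x = iV (reV x) + Complex.I • iV (imV x) := by
  induction x using TensorProduct.induction_on with
  | zero => simp
  | tmul z v =>
      simp only [reV, imV, TensorProduct.lift.tmul, LinearMap.mk₂_apply, iV,
        TensorProduct.mk_apply, TensorProduct.tmul_smul]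
      rw [real_smul_cx, real_smul_cx, smul_smul, ← add_smul, mul_comm Complex.I,
        Complex.re_add_im, TensorProduct.smul_tmul', smul_eq_mul, mul_one]
  | add x y hx hy =>
      rw [map_add, map_add, map_add, map_add, smul_add]
      conv_lhs => rw [hx, hy]
      abel

/-- Real part of a complex functional. -/
def reD : DualC V →ₗ[ℝ] (V →ₗ[ℝ] ℝ) where
  toFun ξ :=
    { toFun := fun v => (ξ (iV v)).re
      map_add' := fun v w => by simp
      map_smul' := fun r v => by
        have h : iV (r • v) = r • iV v := map_smul iV r v
        show (ξ (iV (r • v))).re = _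
        rw [h, LinearMap.map_smul_of_tower, Complex.smul_re]; simp }
  map_add' ξ η := by ext v; simp
  map_smul' r ξ := by ext v; simp [Complex.smul_re]

/-- Imaginary part of a complex functional. -/
def imD : DualC V →ₗ[ℝ] (V →ₗ[ℝ] ℝ) where
  toFun ξ :=
    { toFun := fun v => (ξ (iV v)).im
      map_add' := fun v w => by simp
      map_smul' := fun r v => by
        have h : iV (r • v) = r • iV v := map_smul iV r v
        show (ξ (iV (r • v))).im = _
        rw [h, LinearMap.map_smul_of_tower, Complex.smul_im]; simp }
  map_add' ξ η := by ext v; simp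
  map_smul' r ξ := by ext v; simp [Complex.smul_im]

@[simp] lemma reD_dualExt (α : V →ₗ[ℝ] ℝ) : reD (dualExt α) = α := by
  ext v
  simp [reD, dualExt, iV, dualExtFun, dualExtAux]

@[simp] lemma imD_dualExt (α : V →ₗ[ℝ] ℝ) : imD (dualExt α) = 0 := by
  ext v
  simp [imD, dualExt, iV, dualExtFun, dualExtAux]

@[simp] lemma reD_I_smul (ξ : DualC V) : reD (Complex.I • ξ) = - imD ξ := by
  ext v; simp [reD, imD, Complex.mul_re]

@[simp] lemma imD_I_smul (ξ : DualC V) : imD (Complex.I • ξ) = reD ξ := by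
  ext v; simp [reD, imD, Complex.mul_im]

private lemma dualC_ext {ξ η : DualC V} (h : ∀ v : V, ξ (iV v) = η (iV v)) : ξ = η := by
  apply LinearMap.ext
  intro x
  induction x using TensorProduct.induction_on with
  | zero => simp
  | tmul z v =>
      have hz : z ⊗ₜ[ℝ] v = z • iV v := by
        rw [iV, TensorProduct.mk_apply, TensorProduct.smul_tmul', smul_eq_mul, mul_one]
      rw [hz, map_smul, map_smul, h]
  | add x y hx hy => rw [map_add, map_add, hx, hy]

lemma decompD (ξ : DualC V) : ξ = dualExt (reD ξ) + Complex.I • dualExt (imD ξ) := by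
  apply dualC_ext
  intro v
  have h1 : (dualExt (reD ξ)) (iV v) = ((ξ (iV v)).re : ℂ) := by
    rw [iV, TensorProduct.mk_apply,
      show (dualExt (reD ξ) : DualC V) = dualExtFun (reD ξ) from rfl, dualExtFun_tmul]
    simp [reD, iV]
  have h2 : (dualExt (imD ξ)) (iV v) = ((ξ (iV v)).im : ℂ) := by
    rw [iV, TensorProduct.mk_apply,
      show (dualExt (imD ξ) : DualC V) = dualExtFun (imD ξ) from rfl, dualExtFun_tmul]
    simp [imD, iV]
  rw [LinearMap.add_apply, LinearMap.smul_apply, h1, h2, smul_eq_mul, mul_comm,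
    Complex.re_add_im]

/-- Real part on `𝕋_ℂ V`. -/
def reT : TCx V →ₗ[ℝ] TR V := LinearMap.prodMap reV reD

/-- Imaginary part on `𝕋_ℂ V`. -/
def imT : TCx V →ₗ[ℝ] TR V := LinearMap.prodMap imV imD

@[simp] lemma reT_iT (a : TR V) : reT (iT a) = a := by
  simp [reT, iT, Prod.ext_iff]

@[simp] lemma imT_iT (a : TR V) : imT (iT a) = 0 := by
  simp [imT, iT, Prod.ext_iff]

@[simp] lemma reT_I_smul (x : TCx V) : reT (Complex.I • x) = - imT x := by
  simp [reT, imT, Prod.ext_iff, Prod.smul_fst, Prod.smul_snd]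

@[simp] lemma imT_I_smul (x : TCx V) : imT (Complex.I • x) = reT x := by
  simp [imT, reT, Prod.ext_iff, Prod.smul_fst, Prod.smul_snd]

lemma decompT (x : TCx V) : x = iT (reT x) + Complex.I • iT (imT x) := by
  have h1 := decompV x.1
  have h2 := decompD x.2
  have : x = (x.1, x.2) := rfl
  rw [this]
  rw [Prod.ext_iff]
  constructor
  · simpa [iT, reT, imT, Prod.smul_fst] using h1
  · simpa [iT, reT, imT, Prod.smul_snd] using h2

@[simp] lemma reT_comb (a b : TR V) : reT (iT a + Complex.I • iT b) = a := by
  rw [map_add, reT_I_smul, reT_iT, imT_iT, neg_zero, add_zero]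

@[simp] lemma imT_comb (a b : TR V) : imT (iT a + Complex.I • iT b) = b := by
  rw [map_add, imT_I_smul, imT_iT, reT_iT, zero_add]

private lemma real_smul_tcx (r : ℝ) (y : TCx V) : r • y = (r : ℂ) • y :=
  (algebraMap_smul ℂ r y).symm

lemma reT_smul (z : ℂ) (x : TCx V) :
    reT (z • x) = z.re • reT x - z.im • imT x := by
  have hz : z • x = z.re • x + z.im • (Complex.I • x) := by
    rw [real_smul_tcx, real_smul_tcx, smul_smul, ← add_smul, Complex.re_add_im]
  rw [hz, map_add, map_smul, map_smul, reT_I_smul, smul_neg, sub_eq_add_neg]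

lemma imT_smul (z : ℂ) (x : TCx V) :
    imT (z • x) = z.re • imT x + z.im • reT x := by
  have hz : z • x = z.re • x + z.im • (Complex.I • x) := by
    rw [real_smul_tcx, real_smul_tcx, smul_smul, ← add_smul, Complex.re_add_im]
  rw [hz, map_add, map_smul, map_smul, imT_I_smul]

/-! ### Pairing lemmas -/

lemma pairR_comm (a b : TR V) : pairR a b = pairR b a := by
  simp [pairR, add_comm]

lemma pairR_add_right (a b b' : TR V) : pairR a (b + b') = pairR a b + pairR a b' := by
  rw [pairR_comm, pairR_add_left, pairR_comm b a, pairR_comm b' a]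

lemma pairR_smul_right (c : ℝ) (a b : TR V) : pairR a (c • b) = c * pairR a b := by
  rw [pairR_comm, pairR_smul_left, pairR_comm]

lemma pairC_comm (a b : TCx V) : pairC a b = pairC b a := by
  simp [pairC, add_comm]

lemma pairC_add_right (a b b' : TCx V) : pairC a (b + b') = pairC a b + pairC a b' := by
  rw [pairC_comm, pairC_add_left, pairC_comm b a, pairC_comm b' a]

lemma pairC_smul_right (c : ℂ) (a b : TCx V) : pairC a (c • b) = c * pairC a b := by
  rw [pairC_comm, pairC_smul_left, pairC_comm]

lemma pairC_iT (a b : TR V) : pairC (iT a) (iT b) = ((pairR a b : ℝ) : ℂ) := by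
  have h1 : (dualExt b.2) (iV a.1) = ((b.2 a.1 : ℝ) : ℂ) := by
    rw [iV, TensorProduct.mk_apply,
      show (dualExt b.2 : DualC V) = dualExtFun b.2 from rfl, dualExtFun_tmul, one_mul]
  have h2 : (dualExt a.2) (iV b.1) = ((a.2 b.1 : ℝ) : ℂ) := by
    rw [iV, TensorProduct.mk_apply,
      show (dualExt a.2 : DualC V) = dualExtFun a.2 from rfl, dualExtFun_tmul, one_mul]
  show ((dualExt b.2) (iV a.1) + (dualExt a.2) (iV b.1)) / 2 = _
  rw [h1, h2, pairR]
  push_cast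
  ring

lemma pairC_comb (u v u' v' : TR V) :
    pairC (iT u + Complex.I • iT v) (iT u' + Complex.I • iT v')
      = ((pairR u u' - pairR v v' : ℝ) : ℂ)
        + Complex.I * ((pairR v u' + pairR u v' : ℝ) : ℂ) := by
  rw [pairC_add_left, pairC_add_right, pairC_add_right, pairC_smul_left, pairC_smul_left,
    pairC_smul_right, pairC_smul_right, pairC_iT, pairC_iT, pairC_iT, pairC_iT]
  have hI : Complex.I * (Complex.I * ((pairR v v' : ℝ) : ℂ)) = -((pairR v v' : ℝ) : ℂ) := by
    rw [← mul_assoc, Complex.I_mul_I, neg_one_mul]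
  push_cast
  rw [hI]
  ring

/-! ### Conjugation lemmas -/

@[simp] lemma conjCx_iV (v : V) : conjCx (iV v) = iV v := by
  simp [conjCx, iV]

@[simp] lemma conjDual_dualExt (α : V →ₗ[ℝ] ℝ) : conjDual (dualExt α) = dualExt α := by
  apply dualC_ext
  intro v
  show conjDualFun (dualExtFun α) (iV v) = dualExtFun α (iV v)
  rw [conjDualFun]
  simp only [LinearMap.coe_mk, AddHom.coe_mk]
  rw [show conjCx (iV v) = iV v from conjCx_iV v, iV, TensorProduct.mk_apply,
    dualExtFun_tmul, one_mul]
  simp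

@[simp] lemma conjT_iT (a : TR V) : conjT (iT a) = iT a := by
  show (conjCx (iV a.1), conjDual (dualExt a.2)) = (iV a.1, dualExt a.2)
  rw [conjCx_iV, conjDual_dualExt]

lemma conjT_comb (a b : TR V) :
    conjT (iT a + Complex.I • iT b) = iT a + Complex.I • iT (-b) := by
  rw [map_add, conjT_iT, LinearMap.map_smulₛₗ, conjT_iT, Complex.conj_I, map_neg,
    neg_smul, smul_neg]

lemma conjT_conjT (x : TCx V) : conjT (conjT x) = x := by
  conv_lhs => rw [decompT x, conjT_comb, conjT_comb]
  rw [neg_neg, ← decompT]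

lemma mem_conjSub {L : Submodule ℂ (TCx V)} {x : TCx V} :
    x ∈ conjSub L ↔ conjT x ∈ L := by
  constructor
  · rintro ⟨y, hy, rfl⟩
    rwa [conjT_conjT]
  · intro h
    exact ⟨conjT x, h, conjT_conjT x⟩

/-! ### Nondegeneracy of the real pairing -/

/-- The pairing as a bilinear form. -/
def pairBilin : LinearMap.BilinForm ℝ (TR V) :=
  LinearMap.mk₂ ℝ pairR pairR_add_left pairR_smul_left pairR_add_right pairR_smul_right

@[simp] lemma pairBilin_apply (a b : TR V) : pairBilin a b = pairR a b := rfl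

lemma orthR_eq_orthogonal (W : Submodule ℝ (TR V)) :
    orthR W = (pairBilin (V := V)).orthogonal W := by
  ext a
  constructor
  · intro ha b hb
    show pairBilin b a = 0
    rw [pairBilin_apply, pairR_comm]
    exact ha b hb
  · intro ha b hb
    have h := ha b hb
    change pairBilin b a = 0 at h
    rw [pairBilin_apply, pairR_comm] at h
    exact h

lemma pairBilin_nondeg [FiniteDimensional ℝ V] :
    (pairBilin (V := V)).Nondegenerate := by
  refine (LinearMap.IsRefl.nondegenerate_iff_separatingLeft
    (fun a b h => by rw [pairBilin_apply, pairR_comm]; exact h)).mpr ?_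
  intro a ha
  have h2 : a.2 = 0 := by
    ext y
    have h := ha (y, 0)
    simp only [pairBilin_apply, pairR] at h
    simp only [LinearMap.zero_apply]
    change a.2 y = 0
    have : ((0 : V →ₗ[ℝ] ℝ) a.1 + a.2 y) / 2 = 0 := h
    simp only [LinearMap.zero_apply, zero_add] at this
    linarith
  have h1 : a.1 = 0 := by
    rw [← Module.forall_dual_apply_eq_zero_iff ℝ a.1]
    intro φ
    have h := ha (0, φ)
    simp only [pairBilin_apply, pairR, h2] at h
    have : (φ a.1 + (0 : V →ₗ[ℝ] ℝ) (0 : V)) / 2 = 0 := h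
    simp only [LinearMap.zero_apply, add_zero] at this
    linarith
  exact Prod.ext h1 h2

lemma pairBilin_refl : (pairBilin (V := V)).IsRefl := by
  intro a b h
  show pairBilin b a = 0
  rw [pairBilin_apply, pairR_comm]
  exact h

lemma orthR_orthR [FiniteDimensional ℝ V] (K : Submodule ℝ (TR V)) :
    orthR (orthR K) = K := by
  rw [orthR_eq_orthogonal, orthR_eq_orthogonal]
  exact LinearMap.BilinForm.orthogonal_orthogonal pairBilin_nondeg pairBilin_refl K

/-! ### Quotient lemmas -/

lemma mkK_surjective (K : Submodule ℝ (TR V)) : Function.Surjective (mkK K) :=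
  Submodule.mkQ_surjective _

lemma mkK_eq_zero {K : Submodule ℝ (TR V)} (x : ↥(orthR K)) :
    mkK K x = 0 ↔ (x : TR V) ∈ K := by
  rw [mkK, Submodule.mkQ_apply, Submodule.Quotient.mk_eq_zero, Submodule.mem_comap,
    Submodule.subtype_apply]

/-! ### Auxiliary submodules -/

@[simp] lemma pairR_zero_right (a : TR V) : pairR a 0 = 0 := by
  simp [pairR]

lemma smul_comb (z : ℂ) (a b : TR V) :
    z • (iT a + Complex.I • iT b)
      = iT (z.re • a - z.im • b) + Complex.I • iT (z.re • b + z.im • a) := by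
  conv_lhs => rw [decompT (z • (iT a + Complex.I • iT b))]
  rw [reT_smul, imT_smul, reT_comb, imT_comb]

lemma comb_eq_zero_iff {a b : TR V} (h : iT a + Complex.I • iT b = 0) : a = 0 ∧ b = 0 := by
  constructor
  · have := congrArg reT h
    rwa [reT_comb, map_zero] at this
  · have := congrArg imT h
    rwa [imT_comb, map_zero] at this

private lemma complex_parts {A C : ℝ} (h : (A : ℂ) + Complex.I * (C : ℂ) = 0) :
    A = 0 ∧ C = 0 := by
  constructor
  · have := congrArg Complex.re h
    simpa using this
  · have := congrArg Complex.im h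
    simpa using this

section Main

variable (K : Submodule ℝ (TR V)) (J : quotK K →ₗ[ℝ] quotK K)

/-- The candidate lagrangian associated to `(K, J)`. -/
def Lag (hJ2 : ∀ q : quotK K, J (J q) = -q) : Submodule ℂ (TCx V) where
  carrier := {x | ∃ u v : ↥(orthR K),
    J (mkK K u) = - mkK K v ∧ x = iT (u : TR V) + Complex.I • iT (v : TR V)}
  zero_mem' := by
    refine ⟨0, 0, by simp, by simp⟩
  add_mem' := by
    rintro x y ⟨u, v, hJx, rfl⟩ ⟨u', v', hJy, rfl⟩
    refine ⟨u + u', v + v', ?_, ?_⟩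
    · rw [map_add, map_add, map_add, hJx, hJy]; abel
    · push_cast
      rw [map_add, map_add, smul_add]
      abel
  smul_mem' := by
    rintro z x ⟨u, v, hJx, rfl⟩
    have hJv : J (mkK K v) = mkK K u := by
      have := congrArg J hJx
      rw [map_neg, hJ2] at this
      rw [← neg_neg (J (mkK K v)), ← this, neg_neg]
    refine ⟨z.re • u - z.im • v, z.re • v + z.im • u, ?_, ?_⟩
    · rw [map_sub, map_smul, map_smul, map_sub, map_smul, map_smul, hJx, hJv,
        map_add, map_smul, map_smul]
      rw [smul_neg]
      abel
    · push_cast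
      rw [smul_comb]

variable {K J} {hJ2 : ∀ q : quotK K, J (J q) = -q}

lemma mem_Lag_iff (hJ2 : ∀ q : quotK K, J (J q) = -q)
    (u v : TR V) (hu : u ∈ orthR K) (hv : v ∈ orthR K) :
    iT u + Complex.I • iT v ∈ Lag K J hJ2 ↔ J (mkK K ⟨u, hu⟩) = - mkK K ⟨v, hv⟩ := by
  constructor
  · rintro ⟨u', v', hJx, heq⟩
    have h1 : u = (u' : TR V) := by
      have := congrArg reT heq
      rwa [reT_comb, reT_comb] at this
    have h2 : v = (v' : TR V) := by
      have := congrArg imT heq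
      rwa [imT_comb, imT_comb] at this
    have e1 : (⟨u, hu⟩ : ↥(orthR K)) = u' := Subtype.ext h1
    have e2 : (⟨v, hv⟩ : ↥(orthR K)) = v' := Subtype.ext h2
    rw [e1, e2]
    exact hJx
  · intro h
    exact ⟨⟨u, hu⟩, ⟨v, hv⟩, h, rfl⟩

lemma K_le_orthR (hiso : IsIsotropicR K) : K ≤ orthR K := by
  intro a ha b hb
  exact hiso a ha b hb

/-- The complexification of `K` inside `𝕋_ℂ V`. -/
def KCsub (K : Submodule ℝ (TR V)) : Submodule ℂ (TCx V) where
  carrier := {x | ∃ a ∈ K, ∃ b ∈ K, x = iT a + Complex.I • iT b}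
  zero_mem' := ⟨0, K.zero_mem, 0, K.zero_mem, by simp⟩
  add_mem' := by
    rintro x y ⟨a, ha, b, hb, rfl⟩ ⟨a', ha', b', hb', rfl⟩
    refine ⟨a + a', K.add_mem ha ha', b + b', K.add_mem hb hb', ?_⟩
    rw [map_add, map_add, smul_add]
    abel
  smul_mem' := by
    rintro z x ⟨a, ha, b, hb, rfl⟩
    exact ⟨z.re • a - z.im • b, K.sub_mem (K.smul_mem _ ha) (K.smul_mem _ hb),
      z.re • b + z.im • a, K.add_mem (K.smul_mem _ hb) (K.smul_mem _ ha),
      smul_comb z a b⟩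

lemma span_iT_eq_KCsub : Submodule.span ℂ (iT '' (K : Set (TR V))) = KCsub K := by
  apply le_antisymm
  · rw [Submodule.span_le]
    rintro x ⟨k, hk, rfl⟩
    exact ⟨k, hk, 0, K.zero_mem, by simp⟩
  · rintro x ⟨a, ha, b, hb, rfl⟩
    exact Submodule.add_mem _
      (Submodule.subset_span ⟨a, ha, rfl⟩)
      (Submodule.smul_mem _ _ (Submodule.subset_span ⟨b, hb, rfl⟩))

lemma KCsub_le_Lag (hiso : IsIsotropicR K) (hJ2 : ∀ q : quotK K, J (J q) = -q) :
    KCsub K ≤ Lag K J hJ2 := by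
  rintro x ⟨a, ha, b, hb, rfl⟩
  refine ⟨⟨a, K_le_orthR hiso ha⟩, ⟨b, K_le_orthR hiso hb⟩, ?_, rfl⟩
  have h1 : mkK K ⟨a, K_le_orthR hiso ha⟩ = 0 := (mkK_eq_zero _).mpr ha
  have h2 : mkK K ⟨b, K_le_orthR hiso hb⟩ = 0 := (mkK_eq_zero _).mpr hb
  rw [h1, h2, map_zero, neg_zero]

lemma Lag_inf_conj (hiso : IsIsotropicR K) (hJ2 : ∀ q : quotK K, J (J q) = -q) :
    Lag K J hJ2 ⊓ conjSub (Lag K J hJ2) = KCsub K := by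
  apply le_antisymm
  · rintro x ⟨hx, hxc⟩
    obtain ⟨u, v, hJx, rfl⟩ := hx
    rw [SetLike.mem_coe, mem_conjSub, conjT_comb] at hxc
    have hvneg : -(v : TR V) ∈ orthR K := (orthR K).neg_mem v.2
    have h2 := (mem_Lag_iff hJ2 (u : TR V) (-(v : TR V)) u.2 hvneg).mp hxc
    have e : (⟨(u : TR V), u.2⟩ : ↥(orthR K)) = u := Subtype.ext rfl
    have e2 : (⟨-(v : TR V), hvneg⟩ : ↥(orthR K)) = -v := Subtype.ext rfl
    rw [e, e2, map_neg, neg_neg] at h2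
    -- h2 : J (mkK K u) = mkK K v, hJx : J (mkK K u) = - mkK K v
    have hv0 : mkK K v = 0 := by
      have hvv : mkK K v = - mkK K v := h2.symm.trans hJx
      have h2v : (2 : ℝ) • mkK K v = 0 := by
        rw [two_smul]
        nth_rewrite 2 [hvv]
        simp
      have hhalf : mkK K v = ((1 : ℝ)/2) • ((2 : ℝ) • mkK K v) := by
        rw [smul_smul]
        norm_num
      rw [hhalf, h2v, smul_zero]
    have hu0 : mkK K u = 0 := by
      have h3 := hJ2 (mkK K u)
      rw [hJx, hv0, neg_zero, map_zero] at h3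
      exact neg_eq_zero.mp h3.symm
    exact ⟨(u : TR V), (mkK_eq_zero u).mp hu0, (v : TR V), (mkK_eq_zero v).mp hv0, rfl⟩
  · intro x hx
    refine ⟨KCsub_le_Lag hiso hJ2 hx, ?_⟩
    obtain ⟨a, ha, b, hb, rfl⟩ := hx
    rw [SetLike.mem_coe, mem_conjSub, conjT_comb]
    exact KCsub_le_Lag hiso hJ2 ⟨a, ha, -b, K.neg_mem hb, rfl⟩

end Main

section Main2

variable [FiniteDimensional ℝ V]
variable {K : Submodule ℝ (TR V)} {J : quotK K →ₗ[ℝ] quotK K}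
variable {B : quotK K →ₗ[ℝ] quotK K →ₗ[ℝ] ℝ}

lemma quot_nondeg
    (hB : ∀ x y : ↥(orthR K), B (mkK K x) (mkK K y) = pairR (x : TR V) (y : TR V))
    (q : quotK K) (h : ∀ q', B q q' = 0) : q = 0 := by
  obtain ⟨w, rfl⟩ := mkK_surjective K q
  rw [mkK_eq_zero]
  have hmem : (w : TR V) ∈ orthR (orthR K) := by
    show ∀ b ∈ orthR K, pairR (w : TR V) b = 0
    intro y hy
    have h0 := h (mkK K ⟨y, hy⟩)
    rwa [hB w ⟨y, hy⟩] at h0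
  rwa [orthR_orthR] at hmem

lemma Lag_isLagrangian
    (hiso : IsIsotropicR K)
    (hB : ∀ x y : ↥(orthR K), B (mkK K x) (mkK K y) = pairR (x : TR V) (y : TR V))
    (hJ2 : ∀ q : quotK K, J (J q) = -q)
    (hJskew : ∀ q q' : quotK K, B (J q) q' + B q (J q') = 0) :
    IsLagrangianC (Lag K J hJ2) := by
  apply le_antisymm
  · -- isotropic
    intro x hx
    obtain ⟨u, v, hJuv, rfl⟩ := hx
    show ∀ b ∈ Lag K J hJ2, pairC (iT (u : TR V) + Complex.I • iT (v : TR V)) b = 0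
    rintro y ⟨u', v', hJuv', rfl⟩
    have hmkv : mkK K v = - J (mkK K u) := by rw [hJuv, neg_neg]
    have hmkv' : mkK K v' = - J (mkK K u') := by rw [hJuv', neg_neg]
    have e1 : pairR (u : TR V) (u' : TR V) - pairR (v : TR V) (v' : TR V) = 0 := by
      rw [← hB u u', ← hB v v', hmkv, hmkv']
      have hs := hJskew (mkK K u) (J (mkK K u'))
      rw [hJ2] at hs
      simp only [map_neg, LinearMap.neg_apply, neg_neg] at hs ⊢
      linarith
    have e2 : pairR (v : TR V) (u' : TR V) + pairR (u : TR V) (v' : TR V) = 0 := by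
      rw [← hB v u', ← hB u v', hmkv, hmkv']
      have hs := hJskew (mkK K u) (mkK K u')
      simp only [map_neg, LinearMap.neg_apply] at hs ⊢
      linarith
    rw [pairC_comb, e1, e2]
    simp
  · -- coisotropic
    intro x hx
    have hxo : ∀ y ∈ Lag K J hJ2, pairC x y = 0 := hx
    have hpair : ∀ k ∈ K, pairR (reT x) k = 0 ∧ pairR (imT x) k = 0 := by
      intro k hk
      have hkL : iT k ∈ Lag K J hJ2 :=
        KCsub_le_Lag hiso hJ2 ⟨k, hk, 0, K.zero_mem, by simp⟩
      have h0 := hxo (iT k) hkL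
      have hk0 : (iT k : TCx V) = iT k + Complex.I • iT (0 : TR V) := by simp
      rw [decompT x, hk0, pairC_comb] at h0
      simp only [pairR_zero_right, sub_zero, add_zero] at h0
      exact complex_parts h0
    have hu : reT x ∈ orthR K := fun k hk => (hpair k hk).1
    have hv : imT x ∈ orthR K := fun k hk => (hpair k hk).2
    suffices hreln : J (mkK K ⟨reT x, hu⟩) = - mkK K ⟨imT x, hv⟩ by
      exact ⟨⟨reT x, hu⟩, ⟨imT x, hv⟩, hreln, decompT x⟩
    have hzero : mkK K ⟨imT x, hv⟩ + J (mkK K ⟨reT x, hu⟩) = 0 := by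
      apply quot_nondeg hB
      intro q'
      obtain ⟨u', rfl⟩ := mkK_surjective K q'
      obtain ⟨v', hv'⟩ := mkK_surjective K (-(J (mkK K u')))
      have hyL : iT (u' : TR V) + Complex.I • iT (v' : TR V) ∈ Lag K J hJ2 := by
        refine ⟨u', v', ?_, rfl⟩
        rw [hv', neg_neg]
      have h0 := hxo _ hyL
      rw [decompT x, pairC_comb] at h0
      have e2 := (complex_parts h0).2
      -- e2 : pairR (imT x) ↑u' + pairR (reT x) ↑v' = 0
      have b1 : B (mkK K ⟨imT x, hv⟩) (mkK K u') = pairR (imT x) (u' : TR V) := hB _ _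
      have b2 : B (J (mkK K ⟨reT x, hu⟩)) (mkK K u')
          = pairR (reT x) (v' : TR V) := by
        have hs := hJskew (mkK K ⟨reT x, hu⟩) (mkK K u')
        have hJu' : J (mkK K u') = - mkK K v' := by rw [hv', neg_neg]
        have hb : B (mkK K ⟨reT x, hu⟩) (J (mkK K u'))
            = - pairR (reT x) (v' : TR V) := by
          rw [hJu', map_neg, hB]
        linarith
      rw [map_add, LinearMap.add_apply, b1, b2]
      linarith
    rw [add_comm] at hzero
    exact eq_neg_of_add_eq_zero_left hzero

lemma eq_Lag (hiso : IsIsotropicR K) (hJ2 : ∀ q : quotK K, J (J q) = -q)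
    {L : Submodule ℂ (TCx V)}
    (hlag : IsLagrangianC L)
    (hinter : L ⊓ conjSub L = Submodule.span ℂ (iT '' (K : Set (TR V))))
    (hcond : ∀ (u v : TR V) (hu : u ∈ orthR K) (hv : v ∈ orthR K),
      (iT u + Complex.I • iT v ∈ L ↔ J (mkK K ⟨u, hu⟩) = - mkK K ⟨v, hv⟩)) :
    L = Lag K J hJ2 := by
  have hKC : KCsub K ≤ L := by
    rw [← span_iT_eq_KCsub, ← hinter]
    exact inf_le_left
  ext x
  constructor
  · intro hx
    have hxo : ∀ y ∈ L, pairC x y = 0 := by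
      rw [hlag] at hx
      exact hx
    have hpair : ∀ k ∈ K, pairR (reT x) k = 0 ∧ pairR (imT x) k = 0 := by
      intro k hk
      have hkL : iT k ∈ L := hKC ⟨k, hk, 0, K.zero_mem, by simp⟩
      have h0 := hxo (iT k) hkL
      have hk0 : (iT k : TCx V) = iT k + Complex.I • iT (0 : TR V) := by simp
      rw [decompT x, hk0, pairC_comb] at h0
      simp only [pairR_zero_right, sub_zero, add_zero] at h0
      exact complex_parts h0
    have hu : reT x ∈ orthR K := fun k hk => (hpair k hk).1
    have hv : imT x ∈ orthR K := fun k hk => (hpair k hk).2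
    have hxL : iT (reT x) + Complex.I • iT (imT x) ∈ L := by
      rw [← decompT x]
      exact hx
    have h3 := (hcond (reT x) (imT x) hu hv).mp hxL
    exact ⟨⟨reT x, hu⟩, ⟨imT x, hv⟩, h3, decompT x⟩
  · rintro ⟨u, v, hJuv, rfl⟩
    exact (hcond (u : TR V) (v : TR V) u.2 v.2).mpr hJuv

lemma finrank_KCsub (K : Submodule ℝ (TR V)) :
    finrank ℂ ↥(KCsub K) = finrank ℝ ↥K := by
  let f : (↥K × ↥K) →ₗ[ℝ] TCx V :=
    { toFun := fun p => iT (p.1 : TR V) + Complex.I • iT (p.2 : TR V)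
      map_add' := fun p q => by
        simp only [Prod.fst_add, Prod.snd_add, Submodule.coe_add, map_add, smul_add]
        abel
      map_smul' := fun c p => by
        simp only [Prod.smul_fst, Prod.smul_snd, SetLike.val_smul, map_smul,
          RingHom.id_apply, smul_add]
        rw [smul_comm] }
  have hinj : Function.Injective f := by
    rw [injective_iff_map_eq_zero]
    intro p hp
    have hp' : iT ((p.1 : TR V)) + Complex.I • iT ((p.2 : TR V)) = 0 := hp
    obtain ⟨h1, h2⟩ := comb_eq_zero_iff hp'
    have : p = 0 := by
      apply Prod.ext
      · exact Subtype.ext h1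
      · exact Subtype.ext h2
    exact this
  have hrange : LinearMap.range f = (KCsub K).restrictScalars ℝ := by
    ext x
    constructor
    · rintro ⟨p, rfl⟩
      exact ⟨(p.1 : TR V), p.1.2, (p.2 : TR V), p.2.2, rfl⟩
    · rintro ⟨a, ha, b, hb, rfl⟩
      exact ⟨(⟨a, ha⟩, ⟨b, hb⟩), rfl⟩
  let e1 : (↥K × ↥K) ≃ₗ[ℝ] ↥((KCsub K).restrictScalars ℝ) :=
    (LinearEquiv.ofInjective f hinj).trans (LinearEquiv.ofEq _ _ hrange)
  let e2 : ↥((KCsub K).restrictScalars ℝ) ≃ₗ[ℝ] ↥(KCsub K) :=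
    (Submodule.restrictScalarsEquiv ℝ ℂ (TCx V) (KCsub K)).restrictScalars ℝ
  haveI : Module.Free ℝ ↥K := Module.Free.of_divisionRing ℝ ↥K
  have efin : finrank ℝ ↥(KCsub K) = 2 * finrank ℝ ↥K := by
    rw [← LinearEquiv.finrank_eq (e1.trans e2), Module.finrank_prod]
    ring
  haveI : FiniteDimensional ℝ ↥(KCsub K) := Module.Finite.equiv (e1.trans e2)
  have htower := Module.finrank_mul_finrank ℝ ℂ ↥(KCsub K)
  rw [Complex.finrank_real_complex] at htower
  omega

end Main2

end CDirac

/-- Given an isotropic `K ⊆ 𝕋V` of dimension `r` and a skew complex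
structure `J` on `K^⊥/K`, there is a unique lagrangian `L ⊆ 𝕋_ℂV` with `L ∩ L̄ = K_ℂ`
whose image in `(K^⊥/K)_ℂ` is the `+i`-eigenspace of the complexification of `J`;
in particular such `L` has real index `r`. -/
theorem stmt12 (V : Type*) [AddCommGroup V] [Module ℝ V] [FiniteDimensional ℝ V]
    (m r : ℕ) (hm : m = finrank ℝ V)
    (K : Submodule ℝ (TR V)) (hiso : IsIsotropicR K) (hr : finrank ℝ ↥K = r)
    -- the induced pairing on `K^⊥/K`
    (B : quotK K →ₗ[ℝ] quotK K →ₗ[ℝ] ℝ)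
    (hB : ∀ x y : ↥(orthR K), B (mkK K x) (mkK K y) = pairR (x : TR V) (y : TR V))
    -- the complex structure `J`
    (J : quotK K →ₗ[ℝ] quotK K)
    (hJ2 : ∀ q : quotK K, J (J q) = -q)
    (hJskew : ∀ q q' : quotK K, B (J q) q' + B q (J q') = 0) :
    (∃! L : Submodule ℂ (TCx V),
      IsLagrangianC L ∧
      L ⊓ conjSub L = Submodule.span ℂ (iT '' (K : Set (TR V))) ∧
      (∀ (u v : TR V) (hu : u ∈ orthR K) (hv : v ∈ orthR K),
        (iT u + Complex.I • iT v ∈ L ↔ J (mkK K ⟨u, hu⟩) = - mkK K ⟨v, hv⟩))) ∧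
    ∀ L : Submodule ℂ (TCx V),
      (IsLagrangianC L ∧
       L ⊓ conjSub L = Submodule.span ℂ (iT '' (K : Set (TR V))) ∧
       (∀ (u v : TR V) (hu : u ∈ orthR K) (hv : v ∈ orthR K),
         (iT u + Complex.I • iT v ∈ L ↔ J (mkK K ⟨u, hu⟩) = - mkK K ⟨v, hv⟩))) →
      finrank ℂ ↥(L ⊓ conjSub L) = r := by
  constructor
  · refine ⟨Lag K J hJ2, ⟨Lag_isLagrangian hiso hB hJ2 hJskew, ?_, ?_⟩, ?_⟩
    · rw [Lag_inf_conj hiso hJ2, span_iT_eq_KCsub]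
    · intro u v hu hv
      exact mem_Lag_iff hJ2 u v hu hv
    · rintro L ⟨hlag, hinter, hcond⟩
      exact eq_Lag hiso hJ2 hlag hinter hcond
  · rintro L ⟨-, h2, -⟩
    rw [h2, span_iT_eq_KCsub, finrank_KCsub, hr]
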